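/- Let c : C → X × X be a correspondence over a field k. For any two closed subsets Z₁, Z₂ ⊆ X we have G(c, Z₁ ∪ Z₂) ⊆ G(c, Z₁) ∪ G(c, Z₂). -/

import Mathlib

open AlgebraicGeometry CategoryTheory CategoryTheory.Limits TopologicalSpace Opposite

universe u

/-- A closed subset `Z ⊆ X` is `c`-invariant for a correspondence `c = (c₁, c₂) : C ⟶ X × X`
if `c₁(c₂⁻¹(Z)) ⊆ Z` set-theoretically. -/
def CorrInvariant {C X : Scheme.{u}} (c₁ c₂ : C ⟶ X) (Z : Set X) : Prop :=
  c₁.base '' (c₂.base ⁻¹' Z) ⊆ Z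

/-- `Z ∩ U ⊆ U` is `c|_U`-invariant, where `c|_U : c₁⁻¹(U) ∩ c₂⁻¹(U) → U × U` denotes the
restriction of the correspondence `c = (c₁, c₂)` to an open subset `U ⊆ X`. -/
def CorrRestrictInvariant {C X : Scheme.{u}} (c₁ c₂ : C ⟶ X) (Z U : Set X) : Prop :=
  c₁.base '' ((c₁.base ⁻¹' U ∩ c₂.base ⁻¹' U) ∩ c₂.base ⁻¹' (Z ∩ U)) ⊆ Z ∩ U

/-- `Z` is locally `c`-invariant: every point of `Z` has an open neighbourhood `U ⊆ X` such
that `Z ∩ U ⊆ U` is `c|_U`-invariant. -/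
def CorrLocallyInvariant {C X : Scheme.{u}} (c₁ c₂ : C ⟶ X) (Z : Set X) : Prop :=
  ∀ x ∈ Z, ∃ U : Set X, IsOpen U ∧ x ∈ U ∧ CorrRestrictInvariant c₁ c₂ Z U

/-- `Z ∩ U₀ ⊆ U₀` is locally `c|_{U₀}`-invariant: every point of `Z ∩ U₀` has an open
neighbourhood `U ⊆ U₀` such that `(Z ∩ U₀) ∩ U ⊆ U` is `c|_U`-invariant (the opens of the
open subscheme `U₀` being exactly the opens of `X` contained in `U₀`). -/
def CorrLocallyInvariantOn {C X : Scheme.{u}} (c₁ c₂ : C ⟶ X) (Z U₀ : Set X) : Prop :=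
  ∀ x ∈ Z ∩ U₀, ∃ U : Set X, IsOpen U ∧ U ⊆ U₀ ∧ x ∈ U ∧
    CorrRestrictInvariant c₁ c₂ (Z ∩ U₀) U

/-- `F(c, Z) := c₂⁻¹(Z) ∩ c₁⁻¹(X ∖ Z) ⊆ C`. -/
def corrF {C X : Scheme.{u}} (c₁ c₂ : C ⟶ X) (Z : Set X) : Set C :=
  c₂.base ⁻¹' Z ∩ c₁.base ⁻¹' (Set.univ \ Z)

/-- `G(c, Z) := ⋃_S cl(c₁(S)) ∩ cl(c₂(S)) ⊆ X`, the union over the irreducible components `S`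
of `F(c, Z)` (i.e. the maximal irreducible subsets of `F(c, Z)`). -/
def corrG {C X : Scheme.{u}} (c₁ c₂ : C ⟶ X) (Z : Set X) : Set X :=
  ⋃ S ∈ {S : Set C | Maximal (fun T : Set C => T ⊆ corrF c₁ c₂ Z ∧ IsIrreducible T) S},
    closure (c₁.base '' S) ∩ closure (c₂.base '' S)


section Helpers

variable {α : Type*} [TopologicalSpace α]

lemma chain_sUnion_isIrreducible {c : Set (Set α)} (hc : IsChain (· ⊆ ·) c)
    (hne : c.Nonempty) (h : ∀ t ∈ c, IsIrreducible t) : IsIrreducible (⋃₀ c) := by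
  obtain ⟨t, ht⟩ := hne
  refine ⟨((h t ht).1).mono (Set.subset_sUnion_of_mem ht), ?_⟩
  intro u v hu hv ⟨x, hxc, hxu⟩ ⟨y, hyc, hyv⟩
  obtain ⟨t₁, ht₁, hxt₁⟩ := hxc
  obtain ⟨t₂, ht₂, hyt₂⟩ := hyc
  rcases hc.total ht₁ ht₂ with h12 | h21
  · obtain ⟨z, hz⟩ := (h t₂ ht₂).2 u v hu hv ⟨x, h12 hxt₁, hxu⟩ ⟨y, hyt₂, hyv⟩
    exact ⟨z, Set.subset_sUnion_of_mem ht₂ hz.1, hz.2⟩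
  · obtain ⟨z, hz⟩ := (h t₁ ht₁).2 u v hu hv ⟨x, hxt₁, hxu⟩ ⟨y, h21 hyt₂, hyv⟩
    exact ⟨z, Set.subset_sUnion_of_mem ht₁ hz.1, hz.2⟩

lemma exists_maximal_irreducible_subset {F S : Set α} (hSF : S ⊆ F)
    (hS : IsIrreducible S) :
    ∃ m, S ⊆ m ∧ Maximal (fun T : Set α => T ⊆ F ∧ IsIrreducible T) m := by
  obtain ⟨m, hm, hmax⟩ := zorn_subset_nonempty
    {T : Set α | T ⊆ F ∧ IsIrreducible T}
    (fun ch hch hchain hchne => by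
      refine ⟨⋃₀ ch, ⟨Set.sUnion_subset (fun t ht => (hch ht).1),
        chain_sUnion_isIrreducible hchain hchne (fun t ht => (hch ht).2)⟩,
        fun t ht => Set.subset_sUnion_of_mem ht⟩)
    S ⟨hSF, hS⟩
  exact ⟨m, hm, hmax⟩

end Helpers

/-- **Corollary 1.7(b).**  Let `c : C ⟶ X ×_k X` be a correspondence between schemes of
finite type over a field `k`.  For any two closed subsets `Z₁, Z₂ ⊆ X` we have
`G(c, Z₁ ∪ Z₂) ⊆ G(c, Z₁) ∪ G(c, Z₂)`. -/
theorem corrG_union_subset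
    {k : Type u} [Field k]
    (X C : Scheme.{u}) (sX : X ⟶ Spec (CommRingCat.of k)) (sC : C ⟶ Spec (CommRingCat.of k))
    [LocallyOfFiniteType sX] [QuasiCompact sX] [LocallyOfFiniteType sC] [QuasiCompact sC]
    (c : C ⟶ pullback sX sX)
    (Z₁ Z₂ : Set X) (hZ₁ : IsClosed Z₁) (hZ₂ : IsClosed Z₂) :
    corrG (c ≫ pullback.fst sX sX) (c ≫ pullback.snd sX sX) (Z₁ ∪ Z₂) ⊆
      corrG (c ≫ pullback.fst sX sX) (c ≫ pullback.snd sX sX) Z₁ ∪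
        corrG (c ≫ pullback.fst sX sX) (c ≫ pullback.snd sX sX) Z₂ := by
  intro x hx
  simp only [corrG, Set.mem_iUnion, Set.mem_setOf_eq] at hx
  obtain ⟨S, hS, hxS⟩ := hx
  obtain ⟨⟨hSF, hSirr⟩, -⟩ := hS
  set c₁ := c ≫ pullback.fst sX sX
  set c₂ := c ≫ pullback.snd sX sX
  have hsub : S ⊆ c₂.base ⁻¹' Z₁ ∨ S ⊆ c₂.base ⁻¹' Z₂ := by
    refine (isPreirreducible_iff_isClosed_union_isClosed.mp hSirr.2)
      (c₂.base ⁻¹' Z₁) (c₂.base ⁻¹' Z₂)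
      (hZ₁.preimage c₂.base.hom.continuous) (hZ₂.preimage c₂.base.hom.continuous) ?_
    intro p hp
    exact (hSF hp).1
  have key : ∀ (Z : Set X), S ⊆ c₂.base ⁻¹' Z → Z₁ ∪ Z₂ ⊇ Z →
      x ∈ corrG c₁ c₂ Z := by
    intro Z hSZ hZsub
    have hSFZ : S ⊆ corrF c₁ c₂ Z := by
      intro p hp
      refine ⟨hSZ hp, ?_⟩
      have h2 := (hSF hp).2
      exact ⟨trivial, fun hmem => h2.2 (hZsub hmem)⟩
    obtain ⟨m, hSm, hmax⟩ := exists_maximal_irreducible_subset hSFZ hSirr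
    simp only [corrG, Set.mem_iUnion, Set.mem_setOf_eq]
    refine ⟨m, hmax, ?_, ?_⟩
    · exact closure_mono (Set.image_mono hSm) hxS.1
    · exact closure_mono (Set.image_mono hSm) hxS.2
  rcases hsub with h | h
  · exact Or.inl (key Z₁ h Set.subset_union_left)
  · exact Or.inr (key Z₂ h Set.subset_union_right)
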